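/- Let A, B, C, D ∈ ℚ[t] have degrees s_a, s_b, s_c, s_d with s_d > s_b + 1, s_d > s_c + 1 and s_d > s_a. If x ∈ ℚ((t⁻¹)) solves D x' = A + B x + C x² and deg x ≥ 1, then deg x = s_d − s_c − 1 and the leading coefficient of x equals (s_d − s_c − 1)·(leading coeff of D)/(leading coeff of C). -/

import Mathlib

open Polynomial

/-- The formal derivative (with respect to `X`) of a formal Laurent series. -/
noncomputable def lsDeriv {F : Type*} [Field F] (f : LaurentSeries F) : LaurentSeries F where
  coeff n := (n + 1 : ℤ) * f.coeff (n + 1)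
  isPWO_support' := by
    refine ((HahnSeries.single (-1 : ℤ) (1 : F) * f).isPWO_support).mono ?_
    intro n hn
    have hf : f.coeff (n + 1) ≠ 0 := by
      intro h
      apply hn
      simp [h]
    have hcoeff : (HahnSeries.single (-1 : ℤ) (1 : F) * f).coeff n = f.coeff (n + 1) := by
      have := HahnSeries.coeff_single_mul_add (r := (1 : F)) (x := f) (b := (-1 : ℤ)) (a := n + 1)
      simpa using this
    simp only [HahnSeries.mem_support, hcoeff]
    exact hf

/-- `t`, as an element of `ℚ((t⁻¹))`: the field of Laurent series in `X = t⁻¹`,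
so `t = X⁻¹` is the Hahn series with a single coefficient `1` in degree `-1`. -/
noncomputable def lsT : LaurentSeries ℚ := HahnSeries.single (-1 : ℤ) 1

/-- The formal derivative with respect to `t` on `ℚ((t⁻¹))`: since `X = t⁻¹`,
`d/dt = -X² · d/dX`. -/
noncomputable def tDeriv (f : LaurentSeries ℚ) : LaurentSeries ℚ :=
  -(HahnSeries.single (2 : ℤ) (1 : ℚ)) * lsDeriv f

lemma lsT_pow (k : ℕ) : lsT ^ k = HahnSeries.single (-(k:ℤ)) 1 := by
  rw [lsT, HahnSeries.single_pow]; simp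

lemma algebraMap_lsT (c : ℚ) :
    (algebraMap ℚ (LaurentSeries ℚ)) c = HahnSeries.single (0:ℤ) c := by
  have h : (algebraMap ℚ (LaurentSeries ℚ)) = (HahnSeries.C : ℚ →+* HahnSeries ℤ ℚ) :=
    Subsingleton.elim _ _
  rw [h, HahnSeries.C_apply]

lemma aeval_monomial_lsT (k : ℕ) (c : ℚ) :
    (aeval lsT (monomial k c)) = HahnSeries.single (-(k:ℤ)) c := by
  rw [aeval_monomial, lsT_pow, algebraMap_lsT, HahnSeries.single_mul_single]
  simp

lemma coeff_aeval (P : Polynomial ℚ) (n : ℤ) :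
    (aeval lsT P).coeff n = if n ≤ 0 then P.coeff (-n).toNat else 0 := by
  induction P using Polynomial.induction_on' with
  | add p q hp hq =>
    rw [map_add, HahnSeries.coeff_add, hp, hq, coeff_add]
    split <;> simp
  | monomial k c =>
    rw [aeval_monomial_lsT, HahnSeries.coeff_single, coeff_monomial]
    by_cases h : n = -(k:ℤ)
    · rw [if_pos h, if_pos (by omega), if_pos (by omega)]
    · rw [if_neg h]
      split
      · rw [if_neg (by omega)]
      · rfl

lemma lc_eq {y : LaurentSeries ℚ} (hy : y ≠ 0) : y.leadingCoeff = y.coeff y.order := by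
  rw [HahnSeries.leadingCoeff_eq]

lemma coeff_aeval_lead (P : Polynomial ℚ) :
    (aeval lsT P).coeff (-(P.natDegree:ℤ)) = P.leadingCoeff := by
  rw [coeff_aeval, if_pos (by omega), show ((-(-(P.natDegree:ℤ))).toNat) = P.natDegree by omega]
  rfl

lemma coeff_aeval_eq_zero (P : Polynomial ℚ) {n : ℤ} (hn : n < -(P.natDegree:ℤ)) :
    (aeval lsT P).coeff n = 0 := by
  rw [coeff_aeval]
  split
  · exact Polynomial.coeff_eq_zero_of_natDegree_lt (by omega)
  · rfl

lemma aeval_ne_zero {P : Polynomial ℚ} (hP : P ≠ 0) : aeval lsT P ≠ 0 :=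
  HahnSeries.ne_zero_of_coeff_ne_zero
    (coeff_aeval_lead P ▸ Polynomial.leadingCoeff_ne_zero.mpr hP)

lemma order_aeval {P : Polynomial ℚ} (hP : P ≠ 0) :
    (aeval lsT P).order = -(P.natDegree:ℤ) := by
  apply le_antisymm
  · exact HahnSeries.order_le_of_coeff_ne_zero
      (coeff_aeval_lead P ▸ Polynomial.leadingCoeff_ne_zero.mpr hP)
  · by_contra h
    push_neg at h
    exact (HahnSeries.coeff_order_eq_zero.not.mpr (aeval_ne_zero hP)) (coeff_aeval_eq_zero P h)

lemma neg_single_two : -(HahnSeries.single (2:ℤ) (1:ℚ)) = HahnSeries.single (2:ℤ) (-1:ℚ) := by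
  ext m
  rw [HahnSeries.coeff_neg, HahnSeries.coeff_single, HahnSeries.coeff_single]
  split <;> simp

lemma tDeriv_coeff (f : LaurentSeries ℚ) (n : ℤ) :
    (tDeriv f).coeff n = -(((n:ℚ) - 1) * f.coeff (n - 1)) := by
  have h2 : tDeriv f = HahnSeries.single (2:ℤ) (-1:ℚ) * lsDeriv f := by
    rw [tDeriv]
    exact congrArg (· * lsDeriv f) neg_single_two
  rw [h2]
  have h := HahnSeries.coeff_single_mul_add (r := (-1:ℚ)) (x := lsDeriv f) (b := (2:ℤ)) (a := n - 2)
  rw [show n - 2 + 2 = n by ring] at h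
  rw [h, neg_one_mul]
  show -(((n - 2 + 1 : ℤ) : ℚ) * f.coeff (n - 2 + 1)) = -(((n : ℚ) - 1) * f.coeff (n - 1))
  rw [show n - 2 + 1 = n - 1 by ring]
  push_cast
  ring

lemma tDeriv_coeff_top {x : LaurentSeries ℚ} (hx0 : x ≠ 0) :
    (tDeriv x).coeff (x.order + 1) = -(x.order : ℚ) * x.coeff x.order := by
  rw [tDeriv_coeff, show x.order + 1 - 1 = x.order by ring]
  push_cast
  ring

lemma tDeriv_ne_zero {x : LaurentSeries ℚ} (hx0 : x ≠ 0) (hν : x.order ≤ -1) :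
    tDeriv x ≠ 0 := by
  apply HahnSeries.ne_zero_of_coeff_ne_zero (g := x.order + 1)
  rw [tDeriv_coeff_top hx0]
  refine mul_ne_zero ?_ (HahnSeries.coeff_order_eq_zero.not.mpr hx0)
  have : (x.order : ℚ) ≠ 0 := by exact_mod_cast (by omega : x.order ≠ 0)
  simpa using this

lemma tDeriv_order {x : LaurentSeries ℚ} (hx0 : x ≠ 0) (hν : x.order ≤ -1) :
    (tDeriv x).order = x.order + 1 := by
  apply le_antisymm
  · apply HahnSeries.order_le_of_coeff_ne_zero
    rw [tDeriv_coeff_top hx0]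
    refine mul_ne_zero ?_ (HahnSeries.coeff_order_eq_zero.not.mpr hx0)
    have : (x.order : ℚ) ≠ 0 := by exact_mod_cast (by omega : x.order ≠ 0)
    simpa using this
  · by_contra h
    push_neg at h
    apply (HahnSeries.coeff_order_eq_zero.not.mpr (tDeriv_ne_zero hx0 hν))
    rw [tDeriv_coeff]
    rw [HahnSeries.coeff_eq_zero_of_lt_order (by omega : (tDeriv x).order - 1 < x.order)]
    ring


/-- Let `A, B, C, D ∈ ℚ[t]` have degrees `s_a, s_b, s_c, s_d` with `s_d > s_b + 1`,
`s_d > s_c + 1` and `s_d > s_a`. If `x ∈ ℚ((t⁻¹))` solves `D x' = A + B x + C x²` and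
`deg x ≥ 1` (degree of a Laurent series being minus its order), then
`deg x = s_d − s_c − 1` and the leading coefficient of `x` equals
`(s_d − s_c − 1)·(leading coeff of D)/(leading coeff of C)`. -/
theorem riccati_degree_leading_coeff' (A B C D : Polynomial ℚ)
    (hC : C ≠ 0) (hD : D ≠ 0)
    (hdb : B.natDegree + 1 < D.natDegree)
    (hdc : C.natDegree + 1 < D.natDegree)
    (hda : A.natDegree < D.natDegree)
    (x : LaurentSeries ℚ)
    (hx : aeval lsT D * tDeriv x = aeval lsT A + aeval lsT B * x + aeval lsT C * x ^ 2)
    (hdeg : x.order ≤ -1) :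
    -x.order = (D.natDegree : ℤ) - C.natDegree - 1 ∧
      x.coeff x.order =
        ((D.natDegree : ℚ) - C.natDegree - 1) * D.leadingCoeff / C.leadingCoeff := by
  have hx0 : x ≠ 0 := by
    intro h
    rw [h, HahnSeries.order_zero] at hdeg
    omega
  set ν := x.order with hνdef
  have hxord : x.coeff ν ≠ 0 := HahnSeries.coeff_order_eq_zero.not.mpr hx0
  -- orders
  have hDord : (aeval lsT D * tDeriv x).order = -(D.natDegree:ℤ) + (ν + 1) := by
    rw [HahnSeries.order_mul (aeval_ne_zero hD) (tDeriv_ne_zero hx0 hdeg),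
      order_aeval hD, tDeriv_order hx0 hdeg]
  have hx2 : x ^ 2 = x * x := sq x
  have hx2ne : x ^ 2 ≠ 0 := by rw [hx2]; exact mul_ne_zero hx0 hx0
  have hx2ord : (x ^ 2).order = ν + ν := by
    rw [hx2, HahnSeries.order_mul hx0 hx0]
  have hCord : (aeval lsT C * x ^ 2).order = -(C.natDegree:ℤ) + (ν + ν) := by
    rw [HahnSeries.order_mul (aeval_ne_zero hC) hx2ne, order_aeval hC, hx2ord]
  -- leading coefficients
  have hDlead : (aeval lsT D * tDeriv x).coeff (-(D.natDegree:ℤ) + (ν + 1)) =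
      D.leadingCoeff * (-(ν:ℚ) * x.coeff ν) := by
    have h := HahnSeries.coeff_mul_order_add_order (aeval lsT D) (tDeriv x)
    rw [order_aeval hD, tDeriv_order hx0 hdeg, lc_eq (aeval_ne_zero hD),
      lc_eq (tDeriv_ne_zero hx0 hdeg), order_aeval hD, tDeriv_order hx0 hdeg,
      coeff_aeval_lead, tDeriv_coeff_top hx0] at h
    exact h
  have hClead : (aeval lsT C * x ^ 2).coeff (-(C.natDegree:ℤ) + (ν + ν)) =
      C.leadingCoeff * (x.coeff ν * x.coeff ν) := by
    have hxx : (x ^ 2).coeff (ν + ν) = x.coeff ν * x.coeff ν := by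
      have h := HahnSeries.coeff_mul_order_add_order x x
      rw [lc_eq hx0, ← hx2] at h
      exact h
    have h := HahnSeries.coeff_mul_order_add_order (aeval lsT C) (x ^ 2)
    rw [order_aeval hC, hx2ord, lc_eq (aeval_ne_zero hC), order_aeval hC,
      coeff_aeval_lead, lc_eq hx2ne, hx2ord, hxx] at h
    exact h
  -- coefficient extraction from the equation
  have hcoeff : ∀ n : ℤ, (aeval lsT D * tDeriv x).coeff n =
      (aeval lsT A).coeff n + (aeval lsT B * x).coeff n + (aeval lsT C * x ^ 2).coeff n := by
    intro n
    have h := congrArg (fun y : LaurentSeries ℚ => y.coeff n) hx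
    simpa [HahnSeries.coeff_add] using h
  have hAzero : ∀ n : ℤ, n < -(A.natDegree:ℤ) → (aeval lsT A).coeff n = 0 :=
    fun n hn => coeff_aeval_eq_zero A hn
  have hBzero : ∀ n : ℤ, n < -(B.natDegree:ℤ) + ν → (aeval lsT B * x).coeff n = 0 := by
    intro n hn
    by_cases hB : B = 0
    · simp [hB]
    · apply HahnSeries.coeff_eq_zero_of_lt_order
      rw [HahnSeries.order_mul (aeval_ne_zero hB) hx0, order_aeval hB]
      exact hn
  -- the two order comparisons
  have key1 : ¬ (-(C.natDegree:ℤ) + (ν + ν) < -(D.natDegree:ℤ) + (ν + 1)) := by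
    intro hlt
    have h := hcoeff (-(C.natDegree:ℤ) + (ν + ν))
    rw [HahnSeries.coeff_eq_zero_of_lt_order (hDord ▸ hlt),
      hAzero _ (by omega), hBzero _ (by omega), hClead] at h
    rw [zero_add, zero_add] at h
    exact mul_ne_zero (Polynomial.leadingCoeff_ne_zero.mpr hC)
      (mul_ne_zero hxord hxord) h.symm
  have key2 : ¬ (-(D.natDegree:ℤ) + (ν + 1) < -(C.natDegree:ℤ) + (ν + ν)) := by
    intro hlt
    have hC0 : (aeval lsT C * x ^ 2).coeff (-(D.natDegree:ℤ) + (ν + 1)) = 0 :=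
      HahnSeries.coeff_eq_zero_of_lt_order (by rw [hCord]; exact hlt)
    have h := hcoeff (-(D.natDegree:ℤ) + (ν + 1))
    rw [hDlead, hAzero _ (by omega), hBzero _ (by omega), hC0, add_zero, zero_add] at h
    have hν0 : -(ν:ℚ) ≠ 0 := by
      have : (ν : ℚ) ≠ 0 := by exact_mod_cast (by omega : ν ≠ 0)
      simpa using this
    exact mul_ne_zero (Polynomial.leadingCoeff_ne_zero.mpr hD)
      (mul_ne_zero hν0 hxord) h
  have hord_eq : -(C.natDegree:ℤ) + (ν + ν) = -(D.natDegree:ℤ) + (ν + 1) := by omega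
  have hνval : -ν = (D.natDegree : ℤ) - C.natDegree - 1 := by omega
  refine ⟨hνval, ?_⟩
  -- leading coefficient identity
  have h := hcoeff (-(D.natDegree:ℤ) + (ν + 1))
  rw [hDlead, hAzero _ (by omega), hBzero _ (by omega), ← hord_eq, hClead,
    zero_add, zero_add] at h
  have hCl : C.leadingCoeff ≠ 0 := Polynomial.leadingCoeff_ne_zero.mpr hC
  have hcast : -(ν:ℚ) = (D.natDegree : ℚ) - C.natDegree - 1 := by
    exact_mod_cast congrArg (fun m : ℤ => (m : ℚ)) hνval
  rw [← hcast, eq_div_iff hCl]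
  apply mul_left_cancel₀ hxord
  linear_combination -h
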